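/- Let U : S(ℝⁿ) → S(ℝⁿ) be a bijection satisfying, for all f, g ∈ S(ℝⁿ): (1) U(f + ḡ) = U(f) + conj(U(g)), (2) U(f·g) = U(f)·U(g), (3) U(f ∗ g) = U(f) ∗ U(g). Then for every x₀ ∈ ℝⁿ there exists y₀ ∈ ℝⁿ such that for every f ∈ S(ℝⁿ): if x₀ lies in the support of f, then y₀ lies in the support of Uf. -/
import Mathlib

open MeasureTheory SchwartzMap Complex

lemma aux_schwartz {n : ℕ} (f : EuclideanSpace ℝ (Fin n) → ℂ)
    (hf : ContDiff ℝ ((⊤ : ℕ∞) : WithTop ℕ∞) f)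
    (hsupp : HasCompactSupport f) :
    ∃ g : SchwartzMap (EuclideanSpace ℝ (Fin n)) ℂ, ∀ x, g x = f x := by
  refine ⟨⟨f, hf, ?_⟩, fun x => rfl⟩
  intro k m
  have h1 : Continuous fun x : EuclideanSpace ℝ (Fin n) =>
      ‖x‖ ^ k * ‖iteratedFDeriv ℝ m f x‖ :=
    ((continuous_norm).pow k).mul (hf.continuous_iteratedFDeriv (mod_cast le_top)).norm
  have h2 : HasCompactSupport fun x : EuclideanSpace ℝ (Fin n) =>
      ‖x‖ ^ k * ‖iteratedFDeriv ℝ m f x‖ :=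
    ((hsupp.iteratedFDeriv m).norm).mul_left
  obtain ⟨C, hC⟩ := h1.bounded_above_of_compact_support h2
  exact ⟨C, fun x => (le_abs_self _).trans ((Real.norm_eq_abs _) ▸ hC x)⟩

lemma aux_bump {n : ℕ} (v : EuclideanSpace ℝ (Fin n)) {s r : ℝ} (hs : 0 < s) (hsr : s < r) :
    ∃ g : SchwartzMap (EuclideanSpace ℝ (Fin n)) ℂ,
      (∀ x, dist x v ≤ s → g x = 1) ∧ (∀ x, g x ≠ 0 → dist x v < r) := by
  let b : ContDiffBump v := ⟨s, r, hs, hsr⟩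
  have hcd : ContDiff ℝ ((⊤ : ℕ∞) : WithTop ℕ∞) fun x => ((b x : ℝ) : ℂ) :=
    Complex.ofRealCLM.contDiff.comp b.contDiff
  have hcs : HasCompactSupport fun x => ((b x : ℝ) : ℂ) :=
    b.hasCompactSupport.comp_left (g := fun t : ℝ => (t : ℂ)) (by simp)
  obtain ⟨g, hg⟩ := aux_schwartz _ hcd hcs
  refine ⟨g, fun x hx => ?_, fun x hx => ?_⟩
  · rw [hg]
    have : b x = 1 := b.one_of_mem_closedBall (Metric.mem_closedBall.2 hx)
    rw [this]; norm_num
  · by_contra hc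
    push_neg at hc
    have : b x = 0 := b.zero_of_le_dist hc
    rw [hg x, this] at hx
    simp at hx

lemma aux_tg {n : ℕ} (g : SchwartzMap (EuclideanSpace ℝ (Fin n)) ℂ) :
    Function.HasTemperateGrowth ⇑g := by
  refine ⟨g.smooth ⊤, fun N => ?_⟩
  obtain ⟨C, -, hC⟩ := g.decay 0 N
  refine ⟨0, C, fun x => ?_⟩
  have := hC x
  rw [pow_zero, one_mul] at this
  simpa using this

lemma aux_mul {n : ℕ} (f g : SchwartzMap (EuclideanSpace ℝ (Fin n)) ℂ) :
    ∃ h : SchwartzMap (EuclideanSpace ℝ (Fin n)) ℂ, ∀ x, h x = f x * g x :=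
  ⟨bilinLeftCLM (ContinuousLinearMap.mul ℝ ℂ) (aux_tg g) f, fun x => rfl⟩

theorem stmt_4 (n : ℕ)
    (U : SchwartzMap (EuclideanSpace ℝ (Fin n)) ℂ → SchwartzMap (EuclideanSpace ℝ (Fin n)) ℂ)
    (hUbij : Function.Bijective U)
    (h1 : ∀ f g h : SchwartzMap (EuclideanSpace ℝ (Fin n)) ℂ,
      (∀ x, h x = f x + starRingEnd ℂ (g x)) →
      ∀ x, U h x = U f x + starRingEnd ℂ (U g x))
    (h2 : ∀ f g h : SchwartzMap (EuclideanSpace ℝ (Fin n)) ℂ,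
      (∀ x, h x = f x * g x) → ∀ x, U h x = U f x * U g x)
    (h3 : ∀ f g h : SchwartzMap (EuclideanSpace ℝ (Fin n)) ℂ,
      (∀ x, h x = ∫ y, f (x - y) * g y) →
      ∀ x, U h x = ∫ y, U f (x - y) * U g y) :
    ∀ x₀ : EuclideanSpace ℝ (Fin n), ∃ y₀ : EuclideanSpace ℝ (Fin n),
      ∀ f : SchwartzMap (EuclideanSpace ℝ (Fin n)) ℂ,
        x₀ ∈ tsupport ⇑f → y₀ ∈ tsupport ⇑(U f) := by
  classical
  intro x₀
  have hinj := hUbij.1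
  have hsurj := hUbij.2
  -- U 0 = 0
  have hU0 : U 0 = 0 := by
    have h := h1 0 0 0 (fun x => by simp)
    apply SchwartzMap.ext
    intro x
    have hx := h x
    have hz : starRingEnd ℂ (U 0 x) = 0 := (left_eq_add.mp hx)
    have : U 0 x = 0 := by
      rw [← Complex.conj_conj (U 0 x), hz, map_zero]
    simpa using this
  -- product of Schwartz maps
  obtain ⟨P, hP⟩ : ∃ P : SchwartzMap (EuclideanSpace ℝ (Fin n)) ℂ →
      SchwartzMap (EuclideanSpace ℝ (Fin n)) ℂ → SchwartzMap (EuclideanSpace ℝ (Fin n)) ℂ,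
      ∀ f g x, P f g x = f x * g x := by
    have := fun f g : SchwartzMap (EuclideanSpace ℝ (Fin n)) ℂ => aux_mul f g
    choose P hP using this
    exact ⟨P, hP⟩
  have hUmul : ∀ f g : SchwartzMap (EuclideanSpace ℝ (Fin n)) ℂ,
      ∀ x, U (P f g) x = U f x * U g x := fun f g => h2 f g (P f g) (hP f g)
  -- transport of pointwise identities downward (using injectivity)
  have hPeq : ∀ f g h : SchwartzMap (EuclideanSpace ℝ (Fin n)) ℂ,
      (∀ z, U f z * U g z = U h z) → ∀ x, f x * g x = h x := by
    intro f g h hfg x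
    have h1' : U (P f g) = U h := SchwartzMap.ext fun z => by rw [hUmul f g z]; exact hfg z
    have h2' := hinj h1'
    rw [← hP f g x, h2']
  -- transport of nonvanishing of products upward
  have hPne : ∀ f g : SchwartzMap (EuclideanSpace ℝ (Fin n)) ℂ,
      (∃ x, f x * g x ≠ 0) → ∃ z, U f z * U g z ≠ 0 := by
    rintro f g ⟨x, hx⟩
    by_contra hc
    push_neg at hc
    have hPz : U (P f g) = 0 := SchwartzMap.ext fun z => by
      rw [hUmul f g z, hc z]; rfl
    have : P f g = 0 := hinj (hPz.trans hU0.symm)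
    exact hx (by rw [← hP f g x, this, SchwartzMap.zero_apply])
  -- transport of nonvanishing of products downward
  have hPne' : ∀ f g : SchwartzMap (EuclideanSpace ℝ (Fin n)) ℂ,
      (∃ z, U f z * U g z ≠ 0) → ∃ x, f x * g x ≠ 0 := by
    rintro f g ⟨z, hz⟩
    by_contra hc
    push_neg at hc
    have hPz : P f g = 0 := SchwartzMap.ext fun x => by
      rw [hP f g x, hc x]; rfl
    rw [← hUmul f g z, hPz, hU0, SchwartzMap.zero_apply] at hz
    exact hz rfl
  -- shrinking radii
  obtain ⟨ρ, hρpos, hρdec, hρsmall⟩ :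
      ∃ ρ : ℕ → ℝ, (∀ k, 0 < ρ k) ∧ (∀ k, ρ (k + 1) < ρ k) ∧ ∀ ε > 0, ∃ k, ρ k < ε := by
    refine ⟨fun k => 1 / (k + 1), fun k => by positivity, fun k => ?_,
      fun ε hε => exists_nat_one_div_lt hε⟩
    apply one_div_lt_one_div_of_lt (by positivity)
    push_cast; linarith
  -- plateau bumps at x₀
  choose G hG1 hG2 using fun k : ℕ => aux_bump x₀ (hρpos (k + 1)) (hρdec k)
  -- G k * G (k+1) = G (k+1)
  have hGrel : ∀ k x, G k x * G (k + 1) x = G (k + 1) x := by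
    intro k x
    by_cases hx : G (k + 1) x = 0
    · rw [hx, mul_zero]
    · rw [hG1 k x (hG2 (k + 1) x hx).le, one_mul]
  -- on the closed support of U (G (k+1)), U (G k) = 1
  have hone : ∀ k z, z ∈ tsupport ⇑(U (G (k + 1))) → U (G k) z = 1 := by
    intro k z hz
    have hup : ∀ w, U (G k) w * U (G (k + 1)) w = U (G (k + 1)) w := fun w =>
      (h2 (G k) (G (k + 1)) (G (k + 1)) (fun x => (hGrel k x).symm) w).symm
    have hsub : Function.support ⇑(U (G (k + 1))) ⊆ {w | U (G k) w = 1} := by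
      intro w hw
      exact mul_right_cancel₀ hw (by rw [hup w, one_mul])
    exact closure_minimal hsub
      (isClosed_eq (SchwartzMap.continuous _) continuous_const) hz
  -- compactness
  have hKcpt : ∀ k, IsCompact (tsupport ⇑(U (G (k + 1)))) := by
    intro k
    obtain ⟨C, -, hC⟩ := (U (G k)).decay 1 0
    apply Metric.isCompact_of_isClosed_isBounded (isClosed_tsupport _)
    apply Bornology.IsBounded.subset (Metric.isBounded_closedBall (x := 0) (r := C))
    intro z hz
    have h1' : U (G k) z = 1 := hone k z hz
    have h2' := hC z
    rw [norm_iteratedFDeriv_zero, h1', pow_one] at h2'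
    simp only [norm_one, mul_one] at h2'
    exact mem_closedBall_zero_iff.2 h2'
  -- nonemptiness
  have hGne : ∀ k, ∃ z, U (G k) z ≠ 0 := by
    intro k
    by_contra hc
    push_neg at hc
    have hz : U (G k) = 0 := SchwartzMap.ext fun z => by rw [hc z]; rfl
    have hGz : G k = 0 := hinj (hz.trans hU0.symm)
    have h1' : G k x₀ = 1 := hG1 k x₀ (by rw [dist_self]; exact (hρpos (k + 1)).le)
    rw [hGz, SchwartzMap.zero_apply] at h1'
    exact zero_ne_one h1'
  have hnested : ∀ k, tsupport ⇑(U (G (k + 1))) ⊆ tsupport ⇑(U (G k)) := by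
    intro k z hz
    apply subset_closure
    rw [Function.mem_support, hone k z hz]
    exact one_ne_zero
  -- the intersection point y₀
  obtain ⟨y₀, hy₀⟩ : (⋂ k, tsupport ⇑(U (G (k + 1)))).Nonempty := by
    apply IsCompact.nonempty_iInter_of_sequence_nonempty_isCompact_isClosed
    · intro k; exact hnested (k + 1)
    · intro k
      obtain ⟨z, hz⟩ := hGne (k + 1)
      exact ⟨z, subset_closure hz⟩
    · exact hKcpt 0
    · intro k; exact isClosed_tsupport _
  have hy₀k : ∀ k, y₀ ∈ tsupport ⇑(U (G (k + 1))) := fun k => Set.mem_iInter.1 hy₀ k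
  have hy₀one : ∀ k, U (G k) y₀ = 1 := fun k => hone k y₀ (hy₀k k)
  -- key: for any point y where all U (G k) are 1, there is C with C x₀ = 1
  -- and U C supported near y
  have hkey : ∀ y : EuclideanSpace ℝ (Fin n), (∀ k, U (G k) y = 1) → ∀ rad : ℝ, 0 < rad →
      ∃ C : SchwartzMap (EuclideanSpace ℝ (Fin n)) ℂ,
        C x₀ = 1 ∧ ∀ z, U C z ≠ 0 → dist z y < rad := by
    intro y hy rad hrad
    obtain ⟨c₁, hc₁1, hc₁0⟩ := aux_bump y (half_pos hrad) (half_lt_self hrad)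
    obtain ⟨c₂, hc₂1, hc₂0⟩ := aux_bump y (show (0:ℝ) < rad / 4 by positivity)
      (show rad / 4 < rad / 2 by linarith)
    obtain ⟨C₁, hC₁⟩ := hsurj c₁
    obtain ⟨C₂, hC₂⟩ := hsurj c₂
    have hrel : ∀ x, C₁ x * C₂ x = C₂ x := by
      apply hPeq
      intro z
      rw [hC₁, hC₂]
      by_cases hz : c₂ z = 0
      · rw [hz, mul_zero]
      · rw [hc₁1 z (hc₂0 z hz).le, one_mul]
    have hx₀cl : x₀ ∈ closure (Function.support ⇑C₂) := by
      rw [Metric.mem_closure_iff]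
      intro ε hε
      obtain ⟨k, hk⟩ := hρsmall ε hε
      have hyz : U C₂ y * U (G k) y ≠ 0 := by
        rw [hC₂, hy k, mul_one, hc₂1 y (by rw [dist_self]; positivity)]
        exact one_ne_zero
      obtain ⟨x, hx⟩ := hPne' C₂ (G k) ⟨y, hyz⟩
      refine ⟨x, Function.mem_support.2 (left_ne_zero_of_mul hx), ?_⟩
      rw [dist_comm]
      exact lt_trans (hG2 k x (right_ne_zero_of_mul hx)) hk
    have hC₁x₀ : C₁ x₀ = 1 := by
      have hsub : Function.support ⇑C₂ ⊆ {x | C₁ x = 1} := by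
        intro x hx
        exact mul_right_cancel₀ hx (by rw [hrel x, one_mul])
      exact closure_minimal hsub
        (isClosed_eq (SchwartzMap.continuous _) continuous_const) hx₀cl
    refine ⟨C₁, hC₁x₀, fun z hz => ?_⟩
    rw [hC₁] at hz
    exact hc₁0 z hz
  -- uniqueness: any point where all U (G k) are 1 equals y₀
  have hsingle : ∀ y : EuclideanSpace ℝ (Fin n), (∀ k, U (G k) y = 1) → y = y₀ := by
    intro y hy
    by_contra hne
    have hd : 0 < dist y y₀ / 2 := by
      have := dist_pos.2 hne
      linarith
    obtain ⟨C, hCx₀, hC0⟩ := hkey y hy (dist y y₀ / 2) hd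
    obtain ⟨D, hDx₀, hD0⟩ := hkey y₀ hy₀one (dist y y₀ / 2) hd
    have hzero : ∀ x, C x * D x = (0 : SchwartzMap (EuclideanSpace ℝ (Fin n)) ℂ) x := by
      apply hPeq
      intro z
      rw [hU0, SchwartzMap.zero_apply]
      by_contra hz
      have hz1 := hC0 z (left_ne_zero_of_mul hz)
      have hz2 := hD0 z (right_ne_zero_of_mul hz)
      have ht := dist_triangle y z y₀
      rw [dist_comm y z] at ht
      linarith
    have := hzero x₀
    rw [hCx₀, hDx₀, SchwartzMap.zero_apply, one_mul] at this
    exact one_ne_zero this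
  -- conclusion
  refine ⟨y₀, fun f hf => ?_⟩
  have hAne : ∀ k, (tsupport ⇑(U f) ∩ tsupport ⇑(U (G (k + 1)))).Nonempty := by
    intro k
    have hfx : ∃ x, f x * G (k + 1) x ≠ 0 := by
      have hf' : x₀ ∈ closure (Function.support ⇑f) := hf
      rw [Metric.mem_closure_iff] at hf'
      obtain ⟨x, hxs, hxd⟩ := hf' (ρ (k + 2)) (hρpos (k + 2))
      refine ⟨x, ?_⟩
      rw [hG1 (k + 1) x (by rw [dist_comm]; exact hxd.le), mul_one]
      exact hxs
    obtain ⟨z, hz⟩ := hPne f (G (k + 1)) hfx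
    exact ⟨z, subset_closure (left_ne_zero_of_mul hz),
      subset_closure (right_ne_zero_of_mul hz)⟩
  obtain ⟨y, hy⟩ : (⋂ k, tsupport ⇑(U f) ∩ tsupport ⇑(U (G (k + 1)))).Nonempty := by
    apply IsCompact.nonempty_iInter_of_sequence_nonempty_isCompact_isClosed
    · intro k
      exact Set.inter_subset_inter_right _ (hnested (k + 1))
    · exact hAne
    · exact (hKcpt 0).inter_left (isClosed_tsupport _)
    · intro k
      exact (isClosed_tsupport _).inter (isClosed_tsupport _)
  have hy1 : y ∈ tsupport ⇑(U f) := (Set.mem_iInter.1 hy 0).1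
  have hy2 : ∀ k, U (G k) y = 1 := fun k => hone k y (Set.mem_iInter.1 hy k).2
  rwa [hsingle y hy2] at hy1
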